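/- Let $\gamma: \mathbb{C}^{2n+1} \times \mathbb{C}^{2n+1} \to \mathbb{C}$ be the symmetric bilinear form with $\gamma(e_i, e_j) = \delta_{i, 2n+2-j}$. For every involution $b \in S_{2n+1}$ there exists an ordered basis $v_1, \ldots, v_{2n+1}$ of $\mathbb{C}^{2n+1}$ such that $\gamma(v_i, v_j) \ne 0$ if and only if $j = b(i)$ (i.e., the Gram matrix of $\gamma$ in this basis is a monomial matrix whose underlying permutation is $b$). -/

import Mathlib

/-- The antidiagonal symmetric bilinear form on `ℂ^{2n+1}`:
`γ(u,v) = ∑ i, u i * v (rev i)`, so that `γ(e_i, e_j) = δ_{i, rev j}`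
(in 1-indexed terms, `γ(e_i,e_j) = δ_{i,2n+2-j}`). -/
noncomputable def antidiagForm (n : ℕ) (u v : Fin (2 * n + 1) → ℂ) : ℂ :=
  ∑ i : Fin (2 * n + 1), u i * v i.rev


namespace Stmt7

variable {n : ℕ}

lemma form_single (a c : Fin (2*n+1)) :
    antidiagForm n (Pi.single a 1) (Pi.single c 1) = if a.rev = c then 1 else 0 := by
  simp only [antidiagForm, Pi.single_apply, ite_mul, one_mul, zero_mul, Fin.rev_eq_iff]
  rw [Finset.sum_ite_eq']
  simp [Fin.rev_eq_iff, eq_comm]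

lemma form_add_left (x y z : Fin (2*n+1) → ℂ) :
    antidiagForm n (x + y) z = antidiagForm n x z + antidiagForm n y z := by
  simp [antidiagForm, add_mul, Finset.sum_add_distrib]

lemma form_add_right (x y z : Fin (2*n+1) → ℂ) :
    antidiagForm n x (y + z) = antidiagForm n x y + antidiagForm n x z := by
  simp [antidiagForm, mul_add, Finset.sum_add_distrib]

lemma form_smul_left (c : ℂ) (x z : Fin (2*n+1) → ℂ) :
    antidiagForm n (c • x) z = c * antidiagForm n x z := by
  simp [antidiagForm, Finset.mul_sum, mul_assoc]

lemma form_smul_right (c : ℂ) (x z : Fin (2*n+1) → ℂ) :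
    antidiagForm n x (c • z) = c * antidiagForm n x z := by
  simp [antidiagForm, Finset.mul_sum]; apply Finset.sum_congr rfl; intros; ring

lemma form_comb (a b c d : Fin (2*n+1)) (α β γ δ : ℂ) :
    antidiagForm n (α • (Pi.single a 1 : Fin (2*n+1) → ℂ) + β • (Pi.single b 1 : Fin (2*n+1) → ℂ))
      (γ • (Pi.single c 1 : Fin (2*n+1) → ℂ) + δ • (Pi.single d 1 : Fin (2*n+1) → ℂ))
    = α*γ*(if a.rev = c then 1 else 0) + α*δ*(if a.rev = d then 1 else 0)
      + β*γ*(if b.rev = c then 1 else 0) + β*δ*(if b.rev = d then 1 else 0) := by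
  simp only [form_add_left, form_add_right, form_smul_left, form_smul_right, form_single]
  split_ifs <;> ring

noncomputable def uu (n : ℕ) (k : Fin (2*n+1)) : Fin (2*n+1) → ℂ :=
  if k < k.rev then (1:ℂ) • (Pi.single k 1 : Fin (2*n+1) → ℂ) + (1:ℂ) • (Pi.single k.rev 1 : Fin (2*n+1) → ℂ)
  else if k.rev < k then Complex.I • (Pi.single k.rev 1 : Fin (2*n+1) → ℂ) + (-Complex.I) • (Pi.single k 1 : Fin (2*n+1) → ℂ)
  else ((Real.sqrt 2 : ℝ):ℂ) • (Pi.single k 1 : Fin (2*n+1) → ℂ) + (0:ℂ) • (Pi.single k 1 : Fin (2*n+1) → ℂ)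

lemma uu_gram (k l : Fin (2*n+1)) :
    antidiagForm n (uu n k) (uu n l) = if l = k then 2 else 0 := by
  unfold uu
  split_ifs <;> rw [form_comb] <;> split_ifs <;>
    first
    | (exfalso; simp only [Fin.ext_iff, Fin.lt_def, Fin.val_rev] at *; omega)
    | ring1
    | (ring_nf; norm_num [Complex.I_sq, ← Complex.ofReal_pow, Real.sq_sqrt])

lemma form_sum_right {ι : Type*} (s : Finset ι) (x : Fin (2*n+1) → ℂ) (f : ι → Fin (2*n+1) → ℂ) :
    antidiagForm n x (∑ j ∈ s, f j) = ∑ j ∈ s, antidiagForm n x (f j) := by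
  unfold antidiagForm
  simp only [Finset.sum_apply, Finset.mul_sum]
  rw [Finset.sum_comm]

lemma form_comb_u (a b c d : Fin (2*n+1)) (α β γ δ : ℂ) :
    antidiagForm n (α • uu n a + β • uu n b) (γ • uu n c + δ • uu n d)
    = 2*(α*γ*(if c = a then 1 else 0) + α*δ*(if d = a then 1 else 0)
       + β*γ*(if c = b then 1 else 0) + β*δ*(if d = b then 1 else 0)) := by
  simp only [form_add_left, form_add_right, form_smul_left, form_smul_right, uu_gram]
  split_ifs <;> ring1

noncomputable def al (b : Equiv.Perm (Fin (2*n+1))) (i : Fin (2*n+1)) : ℂ :=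
  if b i = i then 1 else if i < b i then 1 else -Complex.I

noncomputable def be (b : Equiv.Perm (Fin (2*n+1))) (i : Fin (2*n+1)) : ℂ :=
  if b i = i then 0 else if i < b i then Complex.I else 1

noncomputable def vv (n : ℕ) (b : Equiv.Perm (Fin (2*n+1))) (i : Fin (2*n+1)) :
    Fin (2*n+1) → ℂ :=
  al b i • uu n i + be b i • uu n (b i)

lemma vv_gram (b : Equiv.Perm (Fin (2*n+1))) (hb : b * b = 1) (i j : Fin (2*n+1)) :
    antidiagForm n (vv n b i) (vv n b j) ≠ 0 ↔ j = b i := by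
  have hbb : ∀ x, b (b x) = x := fun x => by
    have := congrArg (fun p : Equiv.Perm (Fin (2*n+1)) => p x) hb
    simpa using this
  have e1 : (b j = i) = (j = b i) := by
    apply propext; constructor
    · rintro rfl; exact (hbb j).symm
    · rintro rfl; exact hbb i
  have e2 : (b j = b i) = (j = i) := by
    simp [EmbeddingLike.apply_eq_iff_eq]
  have key : antidiagForm n (vv n b i) (vv n b j)
      = 2*(al b i*al b j*(if j = i then 1 else 0) + al b i*be b j*(if j = b i then 1 else 0)
        + be b i*al b j*(if j = b i then 1 else 0) + be b i*be b j*(if j = i then 1 else 0)) := by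
    unfold vv; rw [form_comb_u]; simp only [e1, e2]
  rw [key]
  by_cases hji : j = i
  · subst hji
    by_cases hfix : b j = j
    · have hjb : j = b j := hfix.symm
      simp only [al, be, if_pos hfix, if_pos rfl, if_pos hjb]
      constructor
      · intro _; exact hjb
      · intro _; norm_num
    · have hne : ¬ (j = b j) := fun h => hfix h.symm
      simp only [al, be, if_pos rfl, if_neg hne, if_neg hfix]
      rcases lt_or_gt_of_ne (fun h : j = b j => hne h) with hlt | hgt
      · simp only [if_pos hlt]
        constructor
        · intro h; exact absurd (by ring_nf; simp [Complex.I_sq]) h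
        · intro h; exact absurd h hne
      · simp only [if_neg (asymm hgt)]
        constructor
        · intro h; exact absurd (by ring_nf; simp [Complex.I_sq]) h
        · intro h; exact absurd h hne
  · by_cases hbi : j = b i
    · have hfi : ¬ (b i = i) := fun h => hji (hbi.trans h)
      have hfj : ¬ (b j = j) := by
        rw [hbi, hbb]; intro h; exact hfi h.symm
      simp only [if_neg hji, if_pos hbi, al, be, if_neg hfi, if_neg hfj]
      have hbj : b j = i := by rw [hbi, hbb]
      rcases lt_or_gt_of_ne (fun h : i = b i => hfi h.symm) with hlt | hgt
      · have h2 : ¬ (j < b j) := by rw [hbj, hbi]; exact asymm hlt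
        simp only [if_pos hlt, if_neg h2]
        constructor
        · intro _; exact hbi
        · intro _
          norm_num [Complex.I_mul_I]
      · have h2 : j < b j := by rw [hbj, hbi]; exact hgt
        simp only [if_neg (asymm hgt), if_pos h2]
        constructor
        · intro _; exact hbi
        · intro _
          norm_num [Complex.I_mul_I]
    · simp only [if_neg hji, if_neg hbi]
      constructor
      · intro h; exact absurd (by ring) h
      · intro h; exact absurd h hbi

end Stmt7

/-- For every involution `b ∈ S_{2n+1}` there is an ordered basis
`v₁,…,v_{2n+1}` of `ℂ^{2n+1}` such that `γ(v_i, v_j) ≠ 0` iff `j = b(i)`, i.e.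
the Gram matrix of `γ` in this basis is a monomial matrix with underlying
permutation `b`. -/
theorem stmt7 (n : ℕ) (b : Equiv.Perm (Fin (2 * n + 1))) (hb : b * b = 1) :
    ∃ v : Module.Basis (Fin (2 * n + 1)) ℂ (Fin (2 * n + 1) → ℂ),
      ∀ i j : Fin (2 * n + 1), antidiagForm n (v i) (v j) ≠ 0 ↔ j = b i := by
  have hgram := Stmt7.vv_gram b hb
  have hbb : ∀ x, b (b x) = x := fun x => by
    have := congrArg (fun p : Equiv.Perm (Fin (2*n+1)) => p x) hb
    simpa using this
  have hli : LinearIndependent ℂ (Stmt7.vv n b) := by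
    rw [Fintype.linearIndependent_iff]
    intro g hg i
    have h0 : antidiagForm n (Stmt7.vv n b (b i)) (∑ j, g j • Stmt7.vv n b j) = 0 := by
      rw [hg]; simp [antidiagForm]
    rw [Stmt7.form_sum_right] at h0
    simp only [Stmt7.form_smul_right] at h0
    rw [Finset.sum_eq_single i] at h0
    · have hne : antidiagForm n (Stmt7.vv n b (b i)) (Stmt7.vv n b i) ≠ 0 :=
        (hgram (b i) i).mpr (hbb i).symm
      exact (mul_eq_zero.mp h0).resolve_right hne
    · intro j _ hji
      have hz : antidiagForm n (Stmt7.vv n b (b i)) (Stmt7.vv n b j) = 0 := by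
        by_contra hc
        exact hji (by rw [(hgram (b i) j).mp hc, hbb])
      rw [hz, mul_zero]
    · intro h; exact absurd (Finset.mem_univ i) h
  have hcard : Fintype.card (Fin (2*n+1)) = Module.finrank ℂ (Fin (2*n+1) → ℂ) := by simp
  refine ⟨basisOfLinearIndependentOfCardEqFinrank hli hcard, ?_⟩
  intro i j
  rw [coe_basisOfLinearIndependentOfCardEqFinrank]
  exact hgram i j
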